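/- Let 0 < D_m < D_n and N > 0. Then D_m·(e^(N/D_m) - 1) ≥ D_n·(e^(N/D_n) - 1). (Pure NOMA consumes at least as much energy as the hybrid NOMA solution with equal powers.) -/

import Mathlib

theorem stmt_4 (Dm Dn N : ℝ) (hDm : 0 < Dm) (hDmn : Dm < Dn) (hN : 0 < N) :
    Dn * (Real.exp (N / Dn) - 1) ≤ Dm * (Real.exp (N / Dm) - 1) := by
  have hDn : 0 < Dn := hDm.trans hDmn
  set x := N / Dn with hx
  set y := N / Dm with hy
  have hx0 : 0 < x := div_pos hN hDn
  have hy0 : 0 < y := div_pos hN hDm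
  have hxy : x ≤ y := by
    apply div_le_div_of_nonneg_left hN.le hDm hDmn.le
  have key := convexOn_exp.secant_mono (a := 0) (x := x) (y := y)
    (Set.mem_univ _) (Set.mem_univ _) (Set.mem_univ _) hx0.ne' hy0.ne' hxy
  simp only [Real.exp_zero, sub_zero] at key
  have h1 : Dn * (Real.exp x - 1) = N * ((Real.exp x - 1) / x) := by
    field_simp [hx]
    have hDx : Dn * x = N := by rw [hx]; field_simp
    linear_combination (Real.exp x - 1) * hDx
  have h2 : Dm * (Real.exp y - 1) = N * ((Real.exp y - 1) / y) := by
    field_simp [hy]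
    have hDy : Dm * y = N := by rw [hy]; field_simp
    linear_combination (Real.exp y - 1) * hDy
  rw [h1, h2]
  exact mul_le_mul_of_nonneg_left key hN.le
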